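/- Let F be a field containing an invertible element q that is not a root of unity, let r be a positive integer, and let σ be the F-linear map on F[t,t^{-1}] with σ(t^m) = q^{-2mr} t^{-m}. Suppose a, c ∈ F are such that the element a(q^{-r} t + q^{r} t^{-1}) + c (q − q^{-1})^{-1} (t − t^{-1}) is fixed by σ. Then c = (q − q^{-1})(q^{r} − q^{-r}) a. In particular, if a ≠ 0 then c ≠ 0. -/

import Mathlib

open LaurentPolynomial

private lemma LP.smul_app {F : Type*} [Field F] (x : F) (p : LaurentPolynomial F) (n : ℤ) :
    (x • p).coeff n = x * p.coeff n := rfl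

private lemma LP.add_app {F : Type*} [Field F] (p q : LaurentPolynomial F) (n : ℤ) :
    (p + q).coeff n = p.coeff n + q.coeff n := rfl

private lemma LP.sub_app {F : Type*} [Field F] (p q : LaurentPolynomial F) (n : ℤ) :
    (p - q).coeff n = p.coeff n - q.coeff n := rfl

/-- **Determination of the Casimir coefficient (rank one).**
Let `q` be a nonzero non-root-of-unity element of a field `F`, `r` a positive integer, and
`σ` the `F`-linear map on `F[t,t⁻¹]` with `σ(tᵐ) = q^{-2mr} t^{-m}`.  If
`a(q^{-r} t + q^{r} t⁻¹) + c (q − q⁻¹)⁻¹ (t − t⁻¹)` is fixed by `σ`, then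
`c = (q − q⁻¹)(q^r − q^{-r}) a`; in particular `a ≠ 0` implies `c ≠ 0`. -/
theorem casimir_coefficient_rank_one {F : Type*} [Field F]
    (q : F) (hq : q ≠ 0) (hroot : ∀ m : ℤ, q ^ m = 1 → m = 0)
    (r : ℕ) (hr : 0 < r)
    (σ : LaurentPolynomial F →ₗ[F] LaurentPolynomial F)
    (hσ : ∀ m : ℤ, σ (T m) = q ^ (-2 * m * (r : ℤ)) • (T (-m) : LaurentPolynomial F))
    (a c : F)
    (hfix : σ (a • (q ^ (-(r : ℤ)) • (T 1 : LaurentPolynomial F)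
          + q ^ (r : ℤ) • (T (-1) : LaurentPolynomial F))
        + c • ((q - q⁻¹)⁻¹ • ((T 1 : LaurentPolynomial F) - T (-1))))
      = a • (q ^ (-(r : ℤ)) • (T 1 : LaurentPolynomial F)
          + q ^ (r : ℤ) • (T (-1) : LaurentPolynomial F))
        + c • ((q - q⁻¹)⁻¹ • ((T 1 : LaurentPolynomial F) - T (-1)))) :
    c = (q - q⁻¹) * (q ^ (r : ℤ) - q ^ (-(r : ℤ))) * a ∧ (a ≠ 0 → c ≠ 0) := by
  have hzn : q ^ ((r : ℤ)) = q ^ r := zpow_natCast q r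
  have hsr : q ^ (-(r : ℤ)) = (q ^ r)⁻¹ := by rw [zpow_neg, hzn]
  have hs : q ^ r ≠ 0 := pow_ne_zero _ hq
  -- q - q⁻¹ ≠ 0
  have hq2 : q - q⁻¹ ≠ 0 := by
    intro h
    have hq1 : q * q = 1 := by
      have h' := sub_eq_zero.mp h
      calc q * q = q * q⁻¹ := by rw [← h']
        _ = 1 := mul_inv_cancel₀ hq
    have h1 : q ^ (2 : ℤ) = 1 := by
      rw [show (2 : ℤ) = ((2 : ℕ) : ℤ) from rfl, zpow_natCast, sq]; exact hq1
    have := hroot 2 h1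
    omega
  -- (q^r)^2 ≠ 1
  have hs2 : (q ^ r) ^ 2 ≠ 1 := by
    intro h
    have h1 : q ^ ((r : ℤ) * 2) = 1 := by
      rw [zpow_mul, show (2 : ℤ) = ((2 : ℕ) : ℤ) from rfl, zpow_natCast, hzn]; exact h
    have := hroot _ h1
    omega
  -- (q^r)^2 + 1 ≠ 0
  have h2 : (q ^ r) ^ 2 + 1 ≠ 0 := by
    intro h
    have hneg : (q ^ r) ^ 2 = -1 := by linear_combination h
    have h1 : q ^ ((r : ℤ) * 4) = 1 := by
      rw [zpow_mul, show (4 : ℤ) = ((4 : ℕ) : ℤ) from rfl, zpow_natCast, hzn,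
        show (q ^ r) ^ (4 : ℕ) = ((q ^ r) ^ 2) ^ 2 by ring, hneg]
      ring
    have := hroot _ h1
    omega
  -- rewrite the σ-values
  have e1 : σ (T 1 : LaurentPolynomial F)
      = ((q ^ r) ^ 2)⁻¹ • (T (-1) : LaurentPolynomial F) := by
    rw [hσ 1, show (-2 * 1 * (r : ℤ)) = -((r : ℤ) * ((2 : ℕ) : ℤ)) by push_cast; ring,
      zpow_neg, zpow_mul, zpow_natCast, hzn]
  have e2 : σ (T (-1) : LaurentPolynomial F)
      = ((q ^ r) ^ 2) • (T 1 : LaurentPolynomial F) := by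
    rw [hσ (-1), show (-2 * (-1) * (r : ℤ)) = (r : ℤ) * ((2 : ℕ) : ℤ) by push_cast; ring,
      zpow_mul, zpow_natCast, hzn]
    norm_num
  rw [map_add, map_smul, map_smul, map_add, map_smul, map_smul, map_smul, map_sub,
    e1, e2, hsr, hzn] at hfix
  -- extract the coefficient at exponent 1
  have h1 := congrArg (fun p : LaurentPolynomial F => p.coeff 1) hfix
  simp only [LP.add_app, LP.smul_app, LP.sub_app, T_apply] at h1
  norm_num at h1
  -- auxiliary multiplicative identities
  have hu : q ^ r * (q ^ r)⁻¹ = 1 := mul_inv_cancel₀ hs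
  have hd : (q - q⁻¹) * (q - q⁻¹)⁻¹ = 1 := mul_inv_cancel₀ hq2
  -- the key coefficient equation, multiplied by (q^r)^2 + 1
  have key2 : ((q ^ r) ^ 2 + 1) * c
      = ((q ^ r) ^ 2 + 1) * ((q - q⁻¹) * (q ^ r - (q ^ r)⁻¹) * a) := by
    linear_combination (-(q - q⁻¹)) * h1 + (-(c * ((q ^ r) ^ 2 + 1))) * hd
      + (q - q⁻¹) * a * q ^ r * hu
  have key : c = (q - q⁻¹) * (q ^ (r : ℤ) - q ^ (-(r : ℤ))) * a := by
    rw [hsr, hzn]; exact mul_left_cancel₀ h2 key2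
  refine ⟨key, fun ha hc => ?_⟩
  rw [key, hsr, hzn] at hc
  have hss : q ^ r - (q ^ r)⁻¹ ≠ 0 := by
    intro h
    have h' := sub_eq_zero.mp h
    have : (q ^ r) ^ 2 = 1 := by
      rw [sq]; nth_rewrite 2 [h']; exact hu
    exact hs2 this
  exact (mul_ne_zero (mul_ne_zero hq2 hss) ha) hc
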